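/- For every positive integer k and every complex number q with |q| < 1 (with the relevant denominators nonzero), the rational function Vbar_k defined by Vbar_1(q) = 2q and Vbar_k(q) = ((q^{2k-1} - q) Vbar_{k-1}(q) + 2q^k(1+q^2)) / (1+q^{2k}) for k > 1 admits the closed form: Vbar_k(q) = (1+q^2) · ( 2q^k/(1+q^{2k}) + 2q^k ((q^2;q^2)_{k-1} / (-q^2;q^2)_k) · sum over j from 0 to k−2 of (-1)^{j+1} (-q^2;q^2)_{k-j-2} / (q^2;q^2)_{k-j-2} ). -/

import Mathlib

open scoped BigOperators

/-- The finite q-Pochhammer symbol `(a; q)_N = ∏_{j=0}^{N-1} (1 - a q^j)`. -/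
noncomputable def qPoch (a q : ℂ) (N : ℕ) : ℂ := ∏ j ∈ Finset.range N, (1 - a * q ^ j)

/-- The infinite q-Pochhammer symbol `(a; q)_∞ = ∏_{j=0}^{∞} (1 - a q^j)`. -/
noncomputable def qPochInf (a q : ℂ) : ℂ := ∏' j : ℕ, (1 - a * q ^ j)

/-- An overpartition of `n`: a multiset of positive non-overlined parts together with a
finset of positive overlined parts (the overlined parts are distinct), with total sum `n`. -/
structure Overpartition (n : ℕ) where
  parts : Multiset ℕ
  overlined : Finset ℕ
  parts_pos : ∀ x ∈ parts, 0 < x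
  overlined_pos : ∀ x ∈ overlined, 0 < x
  sum_eq : parts.sum + ∑ x ∈ overlined, x = n

/-- `s` is the smallest non-overlined part of `π`, it appears exactly `k` times among the
non-overlined parts, and every overlined part is greater than `s`. -/
def SptbarCond (k : ℕ) {n : ℕ} (π : Overpartition n) (s : ℕ) : Prop :=
  s ∈ π.parts ∧ (∀ x ∈ π.parts, s ≤ x) ∧ π.parts.count s = k ∧ ∀ x ∈ π.overlined, s < x

/-- `SptbarCond` together with: every part other than `s` is incongruent to `s` modulo 2. -/
def SptbarOCond (k : ℕ) {n : ℕ} (π : Overpartition n) (s : ℕ) : Prop :=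
  SptbarCond k π s ∧ (∀ x ∈ π.parts, x ≠ s → x % 2 ≠ s % 2) ∧
    ∀ x ∈ π.overlined, x % 2 ≠ s % 2

/-- The number of parts of `π` that are greater than `s`. -/
def numGreater {n : ℕ} (π : Overpartition n) (s : ℕ) : ℕ :=
  (π.parts.filter (fun x => s < x)).card + π.overlined.card

/-- The total number of parts of the overpartition `π`. -/
def numParts {n : ℕ} (π : Overpartition n) : ℕ :=
  π.parts.card + π.overlined.card

/-- `sptbar k n`: the number of overpartitions of `n` whose smallest non-overlined part `s`
appears exactly `k` times and all of whose overlined parts are greater than `s`. -/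
noncomputable def sptbar (k n : ℕ) : ℕ :=
  Nat.card {π : Overpartition n // ∃ s, SptbarCond k π s}

/-- `sptbar' k n = a_e(k,n) - a_o(k,n)`. -/
noncomputable def sptbar' (k n : ℕ) : ℤ :=
  (Nat.card {π : Overpartition n // ∃ s, SptbarCond k π s ∧ Even (numGreater π s)} : ℤ) -
    (Nat.card {π : Overpartition n // ∃ s, SptbarCond k π s ∧ Odd (numGreater π s)} : ℤ)

/-- `sptbarO k n`: as `sptbar k n`, with all parts other than the smallest non-overlined part
incongruent to it modulo 2. -/
noncomputable def sptbarO (k n : ℕ) : ℕ :=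
  Nat.card {π : Overpartition n // ∃ s, SptbarOCond k π s}

/-- `sptbarO' k n = b_e(k,n) - b_o(k,n)`. -/
noncomputable def sptbarO' (k n : ℕ) : ℤ :=
  (Nat.card {π : Overpartition n // ∃ s, SptbarOCond k π s ∧ Even (numGreater π s)} : ℤ) -
    (Nat.card {π : Overpartition n // ∃ s, SptbarOCond k π s ∧ Odd (numGreater π s)} : ℤ)

/-- The number of overpartitions of `n` into even parts. -/
noncomputable def pbarE (n : ℕ) : ℕ :=
  Nat.card {π : Overpartition n // (∀ x ∈ π.parts, Even x) ∧ ∀ x ∈ π.overlined, Even x}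

/-- The number of overpartitions of `n` into odd parts with no non-overlined part equal to 1. -/
noncomputable def pbarOex (n : ℕ) : ℕ :=
  Nat.card {π : Overpartition n //
    (∀ x ∈ π.parts, Odd x) ∧ (∀ x ∈ π.overlined, Odd x) ∧ (1 : ℕ) ∉ π.parts}

/-- Among overpartitions of `n` into odd parts with no non-overlined 1's: the number of those
with an even number of parts minus the number of those with an odd number of parts. -/
noncomputable def pbarOex' (n : ℕ) : ℤ :=
  (Nat.card {π : Overpartition n // ((∀ x ∈ π.parts, Odd x) ∧ (∀ x ∈ π.overlined, Odd x) ∧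
      (1 : ℕ) ∉ π.parts) ∧ Even (numParts π)} : ℤ) -
    (Nat.card {π : Overpartition n // ((∀ x ∈ π.parts, Odd x) ∧ (∀ x ∈ π.overlined, Odd x) ∧
      (1 : ℕ) ∉ π.parts) ∧ Odd (numParts π)} : ℤ)

/-- `sptkd k n`: the number of partitions of `n` whose smallest part appears exactly `k`
times and all of whose remaining parts are distinct. -/
noncomputable def sptkd (k n : ℕ) : ℕ :=
  Nat.card {m : Multiset ℕ // (∀ x ∈ m, 0 < x) ∧ m.sum = n ∧
    ∃ s, s ∈ m ∧ (∀ x ∈ m, s ≤ x) ∧ m.count s = k ∧ ∀ x ∈ m, x ≠ s → m.count x = 1}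

/-- `Vbar q 1 = 2q` and
`Vbar q k = ((q^(2k-1) - q) * Vbar q (k-1) + 2 q^k (1+q^2)) / (1 + q^(2k))` for `k > 1`. -/
noncomputable def Vbar (q : ℂ) : ℕ → ℂ
  | 0 => 0
  | 1 => 2 * q
  | (k + 2) => ((q ^ (2 * (k + 2) - 1) - q) * Vbar q (k + 1) + 2 * q ^ (k + 2) * (1 + q ^ 2)) /
      (1 + q ^ (2 * (k + 2)))

noncomputable def Ssum (q : ℂ) (m : ℕ) : ℂ :=
  ∑ j ∈ Finset.range m, (-1 : ℂ) ^ (j + 1) *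
    (qPoch (-q ^ 2) (q ^ 2) (m - 1 - j) / qPoch (q ^ 2) (q ^ 2) (m - 1 - j))

lemma abs_pow_lt (q : ℂ) (hq : ‖q‖ < 1) (n : ℕ) (hn : 1 ≤ n) :
    ‖q ^ n‖ < 1 := by
  rw [norm_pow]
  exact pow_lt_one₀ (norm_nonneg q) hq (by omega)

lemma one_sub_ne (q : ℂ) (hq : ‖q‖ < 1) (n : ℕ) (hn : 1 ≤ n) : 1 - q ^ n ≠ 0 := by
  intro h
  have h1 : q ^ n = 1 := by linear_combination -h
  have h2 := abs_pow_lt q hq n hn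
  rw [h1] at h2
  simp at h2

lemma one_add_ne (q : ℂ) (hq : ‖q‖ < 1) (n : ℕ) (hn : 1 ≤ n) : 1 + q ^ n ≠ 0 := by
  intro h
  have h2 : q ^ n = -1 := by linear_combination h
  have := abs_pow_lt q hq n hn
  rw [h2] at this
  simp at this

lemma qPoch_pos_ne (q : ℂ) (hq : ‖q‖ < 1) (n : ℕ) :
    qPoch (q ^ 2) (q ^ 2) n ≠ 0 := by
  rw [qPoch]
  apply Finset.prod_ne_zero_iff.mpr
  intro j _
  have : q ^ 2 * (q ^ 2) ^ j = q ^ (2 + 2 * j) := by ring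
  rw [this]
  exact one_sub_ne q hq _ (by omega)

lemma qPoch_neg_ne (q : ℂ) (hq : ‖q‖ < 1) (n : ℕ) :
    qPoch (-q ^ 2) (q ^ 2) n ≠ 0 := by
  rw [qPoch]
  apply Finset.prod_ne_zero_iff.mpr
  intro j _
  have : 1 - -q ^ 2 * (q ^ 2) ^ j = 1 + q ^ (2 + 2 * j) := by ring
  rw [this]
  exact one_add_ne q hq _ (by omega)

lemma qPoch_succ (a q : ℂ) (n : ℕ) : qPoch a q (n + 1) = qPoch a q n * (1 - a * q ^ n) := by
  rw [qPoch, qPoch, Finset.prod_range_succ]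

lemma Ssum_succ (q : ℂ) (m : ℕ) :
    Ssum q (m + 1) = -Ssum q m - qPoch (-q ^ 2) (q ^ 2) m / qPoch (q ^ 2) (q ^ 2) m := by
  have step : Ssum q (m + 1) = (∑ j ∈ Finset.range m,
      -((-1 : ℂ) ^ (j + 1) *
        (qPoch (-q ^ 2) (q ^ 2) (m - 1 - j) / qPoch (q ^ 2) (q ^ 2) (m - 1 - j)))) +
      -(qPoch (-q ^ 2) (q ^ 2) m / qPoch (q ^ 2) (q ^ 2) m) := by
    rw [Ssum, Finset.sum_range_succ']
    congr 1
    · apply Finset.sum_congr rfl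
      intro j hj
      simp only [Finset.mem_range] at hj
      have h : m + 1 - 1 - (j + 1) = m - 1 - j := by omega
      rw [h]
      ring
    · simp
  rw [step, Finset.sum_neg_distrib, Ssum]
  ring

lemma key0 (q t P Q S A B : ℂ) (hP : P ≠ 0) (hQ : Q ≠ 0) (hA : A ≠ 0) (hB : B ≠ 0)
    (h : ((q ^ 3 * t ^ 2 - q) * ((1 + q ^ 2) * (2 * (q * t) * (Q * A) + 2 * (q * t) * P * S * A)) +
      2 * (q ^ 2 * t) * (1 + q ^ 2) * (A * (Q * A))) * (B * (Q * A * B * P)) =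
    (1 + q ^ 2) *
      (2 * (q ^ 2 * t) * (Q * A * B * P) + 2 * (q ^ 2 * t) * (P * (1 - q ^ 2 * t ^ 2)) *
        (-(S * P) - Q) * B) * B * (A * (Q * A))) :
    ((q ^ 3 * t ^ 2 - q) * ((1 + q ^ 2) * (2 * (q * t) / A +
        2 * (q * t) * (P / (Q * A)) * S)) +
      2 * (q ^ 2 * t) * (1 + q ^ 2)) / B =
    (1 + q ^ 2) * (2 * (q ^ 2 * t) / B +
      2 * (q ^ 2 * t) * (P * (1 - q ^ 2 * t ^ 2) / (Q * A * B)) *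
        (-S - Q / P)) := by
  rw [div_eq_iff hB]
  field_simp
  ring

lemma key (q t P Q S A B : ℂ) (hP : P ≠ 0) (hQ : Q ≠ 0) (hA : A ≠ 0) (hB : B ≠ 0)
    (hA' : A = 1 + q ^ 2 * t ^ 2) (hB' : B = 1 + q ^ 4 * t ^ 2) :
    ((q ^ 3 * t ^ 2 - q) * ((1 + q ^ 2) * (2 * (q * t) / A +
        2 * (q * t) * (P / (Q * A)) * S)) +
      2 * (q ^ 2 * t) * (1 + q ^ 2)) / B =
    (1 + q ^ 2) * (2 * (q ^ 2 * t) / B +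
      2 * (q ^ 2 * t) * (P * (1 - q ^ 2 * t ^ 2) / (Q * A * B)) *
        (-S - Q / P)) := by
  apply key0 q t P Q S A B hP hQ hA hB
  rw [hA', hB']
  ring

lemma Vbar_cf (q : ℂ) (hq : ‖q‖ < 1) :
    ∀ k : ℕ, 1 ≤ k → Vbar q k = (1 + q ^ 2) *
      (2 * q ^ k / (1 + q ^ (2 * k)) +
        2 * q ^ k * (qPoch (q ^ 2) (q ^ 2) (k - 1) / qPoch (-q ^ 2) (q ^ 2) k) *
          Ssum q (k - 1)) := by
  have h2 : (1 : ℂ) + q ^ 2 ≠ 0 := one_add_ne q hq 2 (by omega)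
  intro k hk
  induction k, hk using Nat.le_induction with
  | base =>
    simp only [Vbar, Ssum, Finset.range_zero, Finset.sum_empty, mul_zero, add_zero, pow_one,
      mul_one]
    field_simp
    simp
  | succ n hn ih =>
    obtain ⟨m, rfl⟩ : ∃ m, n = m + 1 := ⟨n - 1, by omega⟩
    have hV : Vbar q (m + 2) = ((q ^ (2 * (m + 2) - 1) - q) * Vbar q (m + 1) +
        2 * q ^ (m + 2) * (1 + q ^ 2)) / (1 + q ^ (2 * (m + 2))) := rfl
    rw [hV, ih]
    have e1 : 2 * (m + 2) - 1 = 2 * m + 3 := by omega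
    have e2 : 2 * (m + 2) = 2 * m + 4 := by omega
    have e3 : 2 * (m + 1) = 2 * m + 2 := by omega
    have e4 : (m + 2) - 1 = m + 1 := rfl
    have e5 : (m + 1) - 1 = m := rfl
    rw [e1, e2, e3, e4, e5, Ssum_succ, qPoch_succ (q ^ 2) (q ^ 2) m,
      qPoch_succ (-q ^ 2) (q ^ 2) (m + 1), qPoch_succ (-q ^ 2) (q ^ 2) m]
    have hP : qPoch (q ^ 2) (q ^ 2) m ≠ 0 := qPoch_pos_ne q hq m
    have hQ : qPoch (-q ^ 2) (q ^ 2) m ≠ 0 := qPoch_neg_ne q hq m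
    have hA : (1 : ℂ) + q ^ 2 * (q ^ m) ^ 2 ≠ 0 := by
      have : (1 : ℂ) + q ^ 2 * (q ^ m) ^ 2 = 1 + q ^ (2 * m + 2) := by ring
      rw [this]; exact one_add_ne q hq _ (by omega)
    have hB : (1 : ℂ) + q ^ 4 * (q ^ m) ^ 2 ≠ 0 := by
      have : (1 : ℂ) + q ^ 4 * (q ^ m) ^ 2 = 1 + q ^ (2 * m + 4) := by ring
      rw [this]; exact one_add_ne q hq _ (by omega)
    have hk := key q (q ^ m) (qPoch (q ^ 2) (q ^ 2) m) (qPoch (-q ^ 2) (q ^ 2) m)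
      (Ssum q m) (1 + q ^ 2 * (q ^ m) ^ 2) (1 + q ^ 4 * (q ^ m) ^ 2) hP hQ hA hB rfl rfl
    calc ((q ^ (2 * m + 3) - q) *
          ((1 + q ^ 2) * (2 * q ^ (m + 1) / (1 + q ^ (2 * m + 2)) +
            2 * q ^ (m + 1) * (qPoch (q ^ 2) (q ^ 2) m /
              (qPoch (-q ^ 2) (q ^ 2) m * (1 - -q ^ 2 * (q ^ 2) ^ m))) * Ssum q m)) +
          2 * q ^ (m + 2) * (1 + q ^ 2)) / (1 + q ^ (2 * m + 4))
        = ((q ^ 3 * (q ^ m) ^ 2 - q) * ((1 + q ^ 2) * (2 * (q * q ^ m) / (1 + q ^ 2 * (q ^ m) ^ 2) +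
            2 * (q * q ^ m) * (qPoch (q ^ 2) (q ^ 2) m /
              (qPoch (-q ^ 2) (q ^ 2) m * (1 + q ^ 2 * (q ^ m) ^ 2))) * Ssum q m)) +
          2 * (q ^ 2 * q ^ m) * (1 + q ^ 2)) / (1 + q ^ 4 * (q ^ m) ^ 2) := by
          rw [show (1 : ℂ) + q ^ (2 * m + 2) = 1 + q ^ 2 * (q ^ m) ^ 2 by ring,
            show (1 : ℂ) + q ^ (2 * m + 4) = 1 + q ^ 4 * (q ^ m) ^ 2 by ring,
            show (1 : ℂ) - -q ^ 2 * (q ^ 2) ^ m = 1 + q ^ 2 * (q ^ m) ^ 2 by ring,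
            show (q : ℂ) ^ (2 * m + 3) = q ^ 3 * (q ^ m) ^ 2 by ring,
            show (q : ℂ) ^ (m + 1) = q * q ^ m by ring,
            show (q : ℂ) ^ (m + 2) = q ^ 2 * q ^ m by ring]
      _ = (1 + q ^ 2) * (2 * (q ^ 2 * q ^ m) / (1 + q ^ 4 * (q ^ m) ^ 2) +
            2 * (q ^ 2 * q ^ m) * (qPoch (q ^ 2) (q ^ 2) m * (1 - q ^ 2 * (q ^ m) ^ 2) /
              (qPoch (-q ^ 2) (q ^ 2) m * (1 + q ^ 2 * (q ^ m) ^ 2) * (1 + q ^ 4 * (q ^ m) ^ 2))) *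
            (-Ssum q m - qPoch (-q ^ 2) (q ^ 2) m / qPoch (q ^ 2) (q ^ 2) m)) := hk
      _ = (1 + q ^ 2) * (2 * q ^ (m + 2) / (1 + q ^ (2 * m + 4)) +
            2 * q ^ (m + 2) * (qPoch (q ^ 2) (q ^ 2) m * (1 - q ^ 2 * (q ^ 2) ^ m) /
              (qPoch (-q ^ 2) (q ^ 2) m * (1 - -q ^ 2 * (q ^ 2) ^ m) *
                (1 - -q ^ 2 * (q ^ 2) ^ (m + 1)))) *
            (-Ssum q m - qPoch (-q ^ 2) (q ^ 2) m / qPoch (q ^ 2) (q ^ 2) m)) := by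
          rw [show (1 : ℂ) + q ^ (2 * m + 4) = 1 + q ^ 4 * (q ^ m) ^ 2 by ring,
            show (1 : ℂ) - -q ^ 2 * (q ^ 2) ^ m = 1 + q ^ 2 * (q ^ m) ^ 2 by ring,
            show (1 : ℂ) - -q ^ 2 * (q ^ 2) ^ (m + 1) = 1 + q ^ 4 * (q ^ m) ^ 2 by ring,
            show (1 : ℂ) - q ^ 2 * (q ^ 2) ^ m = 1 - q ^ 2 * (q ^ m) ^ 2 by ring,
            show (q : ℂ) ^ (m + 2) = q ^ 2 * q ^ m by ring]

/-- Theorem 2.5 (first part): closed form for `Vbar q k`. -/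
theorem Vbar_closed_form (k : ℕ) (hk : 1 ≤ k) (q : ℂ) (hq : ‖q‖ < 1) :
    Vbar q k = (1 + q ^ 2) *
      (2 * q ^ k / (1 + q ^ (2 * k)) +
        2 * q ^ k * (qPoch (q ^ 2) (q ^ 2) (k - 1) / qPoch (-q ^ 2) (q ^ 2) k) *
          ∑ j ∈ Finset.range (k - 1), (-1 : ℂ) ^ (j + 1) *
            (qPoch (-q ^ 2) (q ^ 2) (k - j - 2) / qPoch (q ^ 2) (q ^ 2) (k - j - 2))) := by
  have h := Vbar_cf q hq k hk
  rw [h]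
  congr 2
  rw [Ssum]
  congr 1
  apply Finset.sum_congr rfl
  intro j hj
  have e : k - 1 - 1 - j = k - j - 2 := by omega
  rw [e]
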